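/- Let M = (S, A, T, R) be a finite MDP, φ : S → S̄ a state abstraction with |S̄| ≥ 2, and for each pair (s̄, a) ∈ S̄ × A fix a prototype state x_{s̄,a} ∈ φ⁻¹(s̄). Suppose that for each (s̄,a) we draw m independent samples s'_{(s̄,a),1}, …, s'_{(s̄,a),m} from the distribution T(·|x_{s̄,a}, a), with all samples across all pairs mutually independent, and define the empirical abstract transition function T̄_Y(s̄'|s̄,a) = (1/m)·Σ_{i=1}^m 1{φ(s'_{(s̄,a),i}) = s̄'} and the target T̄_{ω_X}(s̄'|s̄,a) = Σ_{s'∈φ⁻¹(s̄')} T(s'|x_{s̄,a}, a). Then for any δ ∈ (0,1) and ε ∈ (0,2), if m ≥ 2·(ln(2^{|S̄|} − 2) − ln(δ/(|S̄|·|A|)))/ε², then with probability at least 1 − δ: for every (s̄,a) ∈ S̄ × A, Σ_{s̄'∈S̄} |T̄_Y(s̄'|s̄,a) − T̄_{ω_X}(s̄'|s̄,a)| ≤ ε. -/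

import Mathlib

open MeasureTheory ProbabilityTheory
open scoped ENNReal

lemma bern_hoeff {p : ℝ} (hp0 : 0 ≤ p) (hp1 : p ≤ 1) {t : ℝ} (ht : 0 ≤ t) :
    1 - p + p * Real.exp t ≤ Real.exp (t * p + t ^ 2 / 8) := by
  set D : ℝ → ℝ := fun s => 1 - p + p * Real.exp s with hDdef
  have hD : ∀ s, 0 < D s := by
    intro s
    rcases hp0.eq_or_lt with h | h
    · simp [hDdef, ← h]
    · have h1 : 0 < p * Real.exp s := by positivity
      have h2 : 0 ≤ 1 - p := by linarith
      simp only [hDdef]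
      nlinarith [Real.exp_pos s]
  have hD' : ∀ s, HasDerivAt D (p * Real.exp s) s := by
    intro s
    exact ((Real.hasDerivAt_exp s).const_mul p).const_add (1 - p)
  set q : ℝ → ℝ := fun s => p * Real.exp s / D s with hqdef
  have hq' : ∀ s, HasDerivAt q (p * Real.exp s * (1 - p) / (D s) ^ 2) s := by
    intro s
    have hnum : HasDerivAt (fun s => p * Real.exp s) (p * Real.exp s) s :=
      (Real.hasDerivAt_exp s).const_mul p
    have := hnum.div (hD' s) (hD s).ne'
    refine this.congr_deriv ?_
    rw [hDdef]
    field_simp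
    ring
  set k : ℝ → ℝ := fun s => s / 4 + p - q s with hkdef
  have hk' : ∀ s, HasDerivAt k (1 / 4 - p * Real.exp s * (1 - p) / (D s) ^ 2) s := by
    intro s
    have h1 : HasDerivAt (fun s : ℝ => s / 4 + p) (1 / 4) s := by
      simpa using ((hasDerivAt_id s).div_const 4).add_const p
    exact h1.sub (hq' s)
  have hkmono : Monotone k := by
    apply monotone_of_deriv_nonneg
    · exact fun s => (hk' s).differentiableAt
    · intro s
      rw [(hk' s).deriv]
      have hDs := hD s
      have he := Real.exp_pos s
      have h4 : p * Real.exp s * (1 - p) / (D s) ^ 2 ≤ 1 / 4 := by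
        rw [div_le_iff₀ (by positivity)]
        have : (D s) ^ 2 = ((1 - p) + p * Real.exp s) ^ 2 := by rw [hDdef]
        nlinarith [sq_nonneg ((1 - p) - p * Real.exp s)]
      linarith
  have hk0 : k 0 = 0 := by
    simp [hkdef, hqdef, hDdef]
  have hknn : ∀ s, 0 ≤ s → 0 ≤ k s := fun s hs => hk0 ▸ hkmono hs
  set g : ℝ → ℝ := fun s => s ^ 2 / 8 + p * s - Real.log (D s) with hgdef
  have hg' : ∀ s, HasDerivAt g (k s) s := by
    intro s
    have h1 : HasDerivAt (fun s : ℝ => s ^ 2 / 8 + p * s) (s / 4 + p) s := by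
      have := ((hasDerivAt_pow 2 s).div_const 8).add ((hasDerivAt_id s).const_mul p)
      refine this.congr_deriv ?_
      simp
      ring
    have h2 : HasDerivAt (fun s => Real.log (D s)) (p * Real.exp s / D s) s :=
      (hD' s).log (hD s).ne'
    exact h1.sub h2
  have hgmono : MonotoneOn g (Set.Ici (0 : ℝ)) := by
    apply monotoneOn_of_deriv_nonneg (convex_Ici 0)
    · exact fun s _ => ((hg' s).differentiableAt).continuousAt.continuousWithinAt
    · exact fun s _ => ((hg' s).differentiableAt).differentiableWithinAt
    · intro s hs
      rw [(hg' s).deriv]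
      exact hknn s (le_of_lt (by simpa using hs))
  have hg0 : g 0 = 0 := by simp [hgdef, hDdef]
  have hgt : 0 ≤ g t := hg0 ▸ hgmono Set.self_mem_Ici ht ht
  have hlog : Real.log (D t) ≤ t * p + t ^ 2 / 8 := by
    simp only [hgdef] at hgt; linarith
  calc D t = Real.exp (Real.log (D t)) := (Real.exp_log (hD t)).symm
    _ ≤ Real.exp (t * p + t ^ 2 / 8) := Real.exp_le_exp.mpr hlog

lemma iIndepFun_precomp {Ω ι ι' β : Type*} {mΩ : MeasurableSpace Ω}
    {mβ : MeasurableSpace β} {μ : Measure Ω} {f : ι → Ω → β}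
    (hf : iIndepFun f μ) (g : ι' → ι) (hg : Function.Injective g) :
    iIndepFun (fun i => f (g i)) μ := by
  classical
  rw [iIndepFun_iff_measure_inter_preimage_eq_mul] at hf ⊢
  intro s sets hsets
  have key := hf (s.map ⟨g, hg⟩)
    (sets := Function.extend g sets (fun _ => Set.univ)) ?_
  · have h1 : (⋂ i ∈ s.map ⟨g, hg⟩, f i ⁻¹' Function.extend g sets (fun _ => Set.univ) i)
        = ⋂ i ∈ s, f (g i) ⁻¹' sets i := by
      simp only [Finset.mem_map, Function.Embedding.coeFn_mk]
      ext ω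
      simp only [Set.mem_iInter]
      constructor
      · intro h i hi
        have := h (g i) ⟨i, hi, rfl⟩
        rwa [hg.extend_apply] at this
      · rintro h j ⟨i, hi, rfl⟩
        rw [hg.extend_apply]
        exact h i hi
    have h2 : (∏ i ∈ s.map ⟨g, hg⟩, μ (f i ⁻¹' Function.extend g sets (fun _ => Set.univ) i))
        = ∏ i ∈ s, μ (f (g i) ⁻¹' sets i) := by
      rw [Finset.prod_map]
      exact Finset.prod_congr rfl fun i _ => by
        simp [Function.Embedding.coeFn_mk, hg.extend_apply]
    rw [h1, h2] at key
    exact key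
  · intro j hj
    simp only [Finset.mem_map, Function.Embedding.coeFn_mk] at hj
    obtain ⟨i, hi, rfl⟩ := hj
    rw [hg.extend_apply]
    exact hsets i hi

lemma mgf_ite {Ω : Type*} {mΩ : MeasurableSpace Ω} (μ : Measure Ω) [IsProbabilityMeasure μ]
    (A : Set Ω) [DecidablePred (· ∈ A)] (hA : MeasurableSet A) (t : ℝ) :
    mgf (fun ω => if ω ∈ A then (1 : ℝ) else 0) μ t
      = 1 - (μ A).toReal + (μ A).toReal * Real.exp t := by
  have hfun : (fun ω => Real.exp (t * (if ω ∈ A then (1 : ℝ) else 0)))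
      = fun ω => (Real.exp t - 1) * A.indicator (1 : Ω → ℝ) ω + 1 := by
    ext ω
    by_cases h : ω ∈ A <;> simp [h, Set.indicator_of_mem, Set.indicator_of_notMem]
  have hind : Integrable (A.indicator (1 : Ω → ℝ)) μ := by
    refine (integrable_indicator_iff hA).mpr ?_
    exact integrableOn_const (measure_ne_top μ A)
  rw [mgf, hfun]
  rw [integral_add ((hind.const_mul _)) (integrable_const 1),
    integral_const_mul, integral_indicator_one hA]
  simp [measure_univ, measureReal_def]
  ring

lemma bern_chernoff {Ω : Type*} {mΩ : MeasurableSpace Ω} (μ : Measure Ω) [IsProbabilityMeasure μ]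
    {m : ℕ} (W : Fin m → Ω → ℝ) (hmeas : ∀ i, Measurable (W i))
    (hindep : iIndepFun W μ)
    (hval : ∀ i ω, W i ω = 0 ∨ W i ω = 1)
    {p : ℝ} (hp0 : 0 ≤ p) (hp1 : p ≤ 1)
    (hmgf : ∀ i t, mgf (W i) μ t = 1 - p + p * Real.exp t)
    {ε : ℝ} (hε : 0 < ε) :
    μ {ω | (m : ℝ) * (p + ε / 2) ≤ ∑ i, W i ω}
      ≤ ENNReal.ofReal (Real.exp (-(m : ℝ) * ε ^ 2 / 2)) := by
  set t₀ : ℝ := 2 * ε with ht₀def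
  have ht₀ : 0 ≤ t₀ := by positivity
  set X : Ω → ℝ := fun ω => ∑ i, W i ω with hXdef
  have hXmeas : Measurable X := Finset.measurable_sum _ fun i _ => hmeas i
  have hXbound : ∀ ω, X ω ≤ (m : ℝ) := by
    intro ω
    calc X ω ≤ ∑ _i : Fin m, (1 : ℝ) := by
          apply Finset.sum_le_sum
          intro i _
          rcases hval i ω with h | h <;> rw [h] <;> norm_num
      _ = (m : ℝ) := by simp
  have hint : Integrable (fun ω => Real.exp (t₀ * X ω)) μ := by
    refine Integrable.mono' (integrable_const (Real.exp (t₀ * m)))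
      ((hXmeas.const_mul t₀).exp.aestronglyMeasurable) ?_
    filter_upwards with ω
    rw [Real.norm_eq_abs, abs_of_pos (Real.exp_pos _), Real.exp_le_exp]
    exact mul_le_mul_of_nonneg_left (hXbound ω) ht₀
  have hch := measure_ge_le_exp_mul_mgf (μ := μ) (X := X) (t := t₀)
    ((m : ℝ) * (p + ε / 2)) ht₀ hint
  have hXsum : X = ∑ i, W i := by ext ω; simp [hXdef]
  have hmgfX : mgf X μ t₀ = (1 - p + p * Real.exp t₀) ^ m := by
    rw [hXsum, hindep.mgf_sum hmeas]
    simp [hmgf, Finset.prod_const, Finset.card_univ]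
  have hDpos : (0 : ℝ) ≤ 1 - p + p * Real.exp t₀ := by nlinarith [Real.exp_pos t₀]
  have hbound : Real.exp (-t₀ * ((m : ℝ) * (p + ε / 2))) * mgf X μ t₀
      ≤ Real.exp (-(m : ℝ) * ε ^ 2 / 2) := by
    rw [hmgfX]
    calc Real.exp (-t₀ * ((m : ℝ) * (p + ε / 2))) * (1 - p + p * Real.exp t₀) ^ m
        ≤ Real.exp (-t₀ * ((m : ℝ) * (p + ε / 2))) * (Real.exp (t₀ * p + t₀ ^ 2 / 8)) ^ m := by
          apply mul_le_mul_of_nonneg_left _ (le_of_lt (Real.exp_pos _))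
          exact pow_le_pow_left₀ hDpos (bern_hoeff hp0 hp1 ht₀) m
      _ = Real.exp (-t₀ * ((m : ℝ) * (p + ε / 2)) + (m : ℝ) * (t₀ * p + t₀ ^ 2 / 8)) := by
          rw [← Real.exp_nat_mul, ← Real.exp_add]
      _ = Real.exp (-(m : ℝ) * ε ^ 2 / 2) := by
          congr 1
          rw [ht₀def]; ring
  have hfin := hch.trans hbound
  calc μ {ω | (m : ℝ) * (p + ε / 2) ≤ ∑ i, W i ω}
      = ENNReal.ofReal ((μ {ω | (m : ℝ) * (p + ε / 2) ≤ X ω}).toReal) := by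
        rw [ENNReal.ofReal_toReal (measure_ne_top μ _)]
    _ ≤ ENNReal.ofReal (Real.exp (-(m : ℝ) * ε ^ 2 / 2)) := ENNReal.ofReal_le_ofReal hfin

theorem stmt13 {Ω : Type*} [MeasurableSpace Ω] (μ : Measure Ω) [IsProbabilityMeasure μ]
    {S Sb A : Type*} [Fintype S] [Fintype Sb] [Fintype A]
    [Nonempty S] [Nonempty Sb] [Nonempty A] [DecidableEq S] [DecidableEq Sb]
    [MeasurableSpace S] [MeasurableSingletonClass S]
    -- the MDP transition function
    (T : S → A → S → ℝ)
    (hT0 : ∀ s a s', 0 ≤ T s a s') (hT1 : ∀ s a, ∑ s', T s a s' = 1)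
    -- the state abstraction with |Sb| ≥ 2
    (φ : S → Sb) (hφ : Function.Surjective φ) (hcard : 2 ≤ Fintype.card Sb)
    -- the prototype states x (sb, a) ∈ φ⁻¹ sb
    (x : Sb → A → S) (hx : ∀ sb a, φ (x sb a) = sb)
    -- for each pair (sb, a), m samples from T(·| x (sb,a), a), all mutually independent
    (m : ℕ) (Y : (Sb × A) × Fin m → Ω → S) (hYmeas : ∀ q, Measurable (Y q))
    (hindep : iIndepFun Y μ)
    (hdist : ∀ (q : (Sb × A) × Fin m) (s' : S),
      (μ {ω | Y q ω = s'}).toReal = T (x q.1.1 q.1.2) q.1.2 s')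
    (δ ε : ℝ) (hδ0 : 0 < δ) (hδ1 : δ < 1) (hε0 : 0 < ε) (hε2 : ε < 2)
    -- the sample-size requirement
    (hm : 2 * (Real.log ((2 : ℝ) ^ (Fintype.card Sb) - 2)
        - Real.log (δ / ((Fintype.card Sb : ℝ) * (Fintype.card A : ℝ)))) / ε ^ 2 ≤ (m : ℝ)) :
    -- with probability at least 1 − δ, every pair's empirical abstract transition
    -- function is ε-close (in L1) to its target
    1 - ENNReal.ofReal δ
      ≤ μ {ω | ∀ (sb : Sb) (a : A), ∑ sb' : Sb,
          |(1 / (m : ℝ)) * ∑ i : Fin m, (if φ (Y ((sb, a), i) ω) = sb' then (1 : ℝ) else 0)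
            - ∑ s' ∈ Finset.univ.filter (fun s' => φ s' = sb'), T (x sb a) a s'| ≤ ε} := by
  classical
  -- notation
  set kS : ℕ := Fintype.card Sb with hkSdef
  set kA : ℕ := Fintype.card A with hkAdef
  have hkS1 : (1 : ℝ) ≤ kS := by
    have : (2 : ℕ) ≤ kS := hcard
    exact_mod_cast le_trans (by norm_num) this
  have hkA1 : (1 : ℝ) ≤ kA := by
    have : (1 : ℕ) ≤ kA := Fintype.card_pos
    exact_mod_cast this
  have h2k : (4 : ℝ) ≤ (2 : ℝ) ^ kS := by
    calc (4 : ℝ) = 2 ^ 2 := by norm_num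
      _ ≤ 2 ^ kS := by
        apply pow_le_pow_right₀ (by norm_num) hcard
  have h2k2pos : (0 : ℝ) < (2 : ℝ) ^ kS - 2 := by linarith
  have hlog1 : 0 < Real.log ((2 : ℝ) ^ kS - 2) := Real.log_pos (by linarith)
  have hkAS : (0 : ℝ) < (kS : ℝ) * (kA : ℝ) := by nlinarith
  have hlog2 : Real.log (δ / ((kS : ℝ) * (kA : ℝ))) < 0 := by
    apply Real.log_neg (by positivity)
    rw [div_lt_one hkAS]
    nlinarith
  -- m is positive
  have hmpos : (0 : ℝ) < (m : ℝ) := by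
    refine lt_of_lt_of_le ?_ hm
    apply div_pos (by linarith) (by positivity)
  have hm0 : (m : ℝ) ≠ 0 := ne_of_gt hmpos
  -- the exponential bound
  set Nreal : ℝ := (kS : ℝ) * (kA : ℝ) * ((2 : ℝ) ^ kS - 2) with hNdef
  have hNpos : 0 < Nreal := by positivity
  set c : ℝ := δ / Nreal with hcdef
  have hcpos : 0 < c := by positivity
  have hexp : Real.exp (-(m : ℝ) * ε ^ 2 / 2) ≤ c := by
    have h1 : 2 * (Real.log ((2 : ℝ) ^ kS - 2)
        - Real.log (δ / ((kS : ℝ) * (kA : ℝ)))) ≤ (m : ℝ) * ε ^ 2 := by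
      rw [div_le_iff₀ (by positivity)] at hm
      linarith
    have h2 : -(m : ℝ) * ε ^ 2 / 2
        ≤ Real.log (δ / ((kS : ℝ) * (kA : ℝ))) - Real.log ((2 : ℝ) ^ kS - 2) := by
      linarith
    have h3 : Real.log (δ / ((kS : ℝ) * (kA : ℝ))) - Real.log ((2 : ℝ) ^ kS - 2)
        = Real.log c := by
      rw [hcdef, hNdef, ← Real.log_div (by positivity) (ne_of_gt h2k2pos)]
      congr 1
      field_simp
    rw [h3] at h2
    calc Real.exp (-(m : ℝ) * ε ^ 2 / 2) ≤ Real.exp (Real.log c) := Real.exp_le_exp.mpr h2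
      _ = c := Real.exp_log hcpos
  -- probabilities for subsets
  set pB : Sb → A → Finset Sb → ℝ :=
    fun sb a B => ∑ s' ∈ Finset.univ.filter (fun s' => φ s' ∈ B), T (x sb a) a s' with hpBdef
  have hpB0 : ∀ sb a B, 0 ≤ pB sb a B := fun sb a B =>
    Finset.sum_nonneg fun s' _ => hT0 _ _ _
  have hpB1 : ∀ sb a B, pB sb a B ≤ 1 := by
    intro sb a B
    rw [hpBdef]
    calc ∑ s' ∈ Finset.univ.filter (fun s' => φ s' ∈ B), T (x sb a) a s'
        ≤ ∑ s', T (x sb a) a s' := by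
          apply Finset.sum_le_sum_of_subset_of_nonneg (Finset.filter_subset _ _)
          intro s' _ _; exact hT0 _ _ _
      _ = 1 := hT1 _ _
  -- measure of preimages
  have hmuA : ∀ (q : (Sb × A) × Fin m) (B : Finset Sb),
      (μ (Y q ⁻¹' {s | φ s ∈ B})).toReal = pB q.1.1 q.1.2 B := by
    intro q B
    have hset : Y q ⁻¹' {s | φ s ∈ B}
        = ⋃ s' ∈ (Finset.univ.filter (fun s' => φ s' ∈ B) : Finset S), Y q ⁻¹' {s'} := by
      ext ω
      simp
    rw [hset, measure_biUnion_finset ?_ (fun s' _ => (hYmeas q) (measurableSet_singleton s'))]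
    · rw [ENNReal.toReal_sum (fun s' _ => measure_ne_top μ _), hpBdef]
      refine Finset.sum_congr rfl fun s' _ => ?_
      have h : Y q ⁻¹' {s'} = {ω | Y q ω = s'} := by ext ω; simp
      rw [h, hdist]
    · intro s1 _ s2 _ hne
      exact Disjoint.preimage _ (Set.disjoint_singleton.mpr hne)
  -- the bad events
  set W : Sb → A → Finset Sb → Fin m → Ω → ℝ :=
    fun sb a B i => (fun s => if φ s ∈ B then (1 : ℝ) else 0) ∘ (Y ((sb, a), i)) with hWdef
  set E : Sb → A → Finset Sb → Set Ω :=
    fun sb a B => {ω | (m : ℝ) * (pB sb a B + ε / 2) ≤ ∑ i, W sb a B i ω} with hEdef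
  have hE : ∀ sb a B, μ (E sb a B) ≤ ENNReal.ofReal c := by
    intro sb a B
    have hWmeas : ∀ i, Measurable (W sb a B i) :=
      fun i => (measurable_of_finite _).comp (hYmeas _)
    have hWindep : iIndepFun (W sb a B) μ := by
      have hinj : Function.Injective (fun i : Fin m => (((sb, a), i) : (Sb × A) × Fin m)) :=
        fun i j h => by simpa using congrArg Prod.snd h
      exact (iIndepFun_precomp hindep _ hinj).comp
        (fun _ => (fun s => if φ s ∈ B then (1 : ℝ) else 0)) (fun _ => measurable_of_finite _)
    have hWval : ∀ i ω, W sb a B i ω = 0 ∨ W sb a B i ω = 1 := by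
      intro i ω
      by_cases h : φ (Y ((sb, a), i) ω) ∈ B
      · right; simp [hWdef, Function.comp, h]
      · left; simp [hWdef, Function.comp, h]
    have hWmgf : ∀ i t, mgf (W sb a B i) μ t = 1 - pB sb a B + pB sb a B * Real.exp t := by
      intro i t
      have hAmeas : MeasurableSet (Y ((sb, a), i) ⁻¹' {s | φ s ∈ B}) :=
        hYmeas _ ((Set.to_countable _).measurableSet)
      have hWeq : W sb a B i
          = fun ω => if ω ∈ Y ((sb, a), i) ⁻¹' {s | φ s ∈ B} then (1 : ℝ) else 0 := by
        funext ω
        by_cases h : φ (Y ((sb, a), i) ω) ∈ B <;>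
          simp [hWdef, Function.comp, h, Set.mem_preimage, Set.mem_setOf_eq]
      rw [hWeq, mgf_ite μ _ hAmeas t, hmuA ((sb, a), i) B]
    calc μ (E sb a B)
        ≤ ENNReal.ofReal (Real.exp (-(m : ℝ) * ε ^ 2 / 2)) :=
          bern_chernoff μ (W sb a B) hWmeas hWindep hWval (hpB0 sb a B) (hpB1 sb a B) hWmgf hε0
      _ ≤ ENNReal.ofReal c := ENNReal.ofReal_le_ofReal hexp
  -- the good index set of subsets
  set J : Finset (Finset Sb) :=
    Finset.univ.filter (fun B => B ≠ ∅ ∧ B ≠ Finset.univ) with hJdef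
  have hJcard : (J.card : ℝ) = (2 : ℝ) ^ kS - 2 := by
    have hne : (∅ : Finset Sb) ≠ Finset.univ := (Finset.univ_nonempty.ne_empty).symm
    have hJeq : J = Finset.univ \ ({∅, Finset.univ} : Finset (Finset Sb)) := by
      ext B
      simp [hJdef, and_comm]
    have hcard2 : ({∅, Finset.univ} : Finset (Finset Sb)).card = 2 := by
      rw [Finset.card_insert_of_notMem (by simp [hne]), Finset.card_singleton]
    have : J.card = 2 ^ kS - 2 := by
      rw [hJeq, Finset.card_sdiff_of_subset (Finset.subset_univ _), hcard2, Finset.card_univ,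
        Fintype.card_finset]
    rw [this]
    have h2 : 2 ≤ 2 ^ kS := by
      calc 2 ≤ 2 ^ 2 := by norm_num
        _ ≤ 2 ^ kS := Nat.pow_le_pow_right (by norm_num) hcard
    push_cast [h2]
    ring
  -- the bad event and union bound
  set Bad : Set Ω := ⋃ sb, ⋃ a, ⋃ B ∈ J, E sb a B with hBaddef
  have hBadBound : μ Bad ≤ ENNReal.ofReal δ := by
    have h1 : μ Bad ≤ ∑ sb : Sb, ∑ a : A, ∑ _B ∈ J, ENNReal.ofReal c := by
      rw [hBaddef]
      refine (measure_iUnion_le _).trans ?_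
      rw [tsum_fintype]
      refine Finset.sum_le_sum fun sb _ => ?_
      refine (measure_iUnion_le _).trans ?_
      rw [tsum_fintype]
      refine Finset.sum_le_sum fun a _ => ?_
      refine (measure_biUnion_finset_le _ _).trans ?_
      exact Finset.sum_le_sum fun B _ => hE sb a B
    refine h1.trans ?_
    have h2 : ∑ sb : Sb, ∑ a : A, ∑ _B ∈ J, ENNReal.ofReal c
        = (kS : ℝ≥0∞) * (kA : ℝ≥0∞) * (J.card : ℝ≥0∞) * ENNReal.ofReal c := by
      simp [Finset.sum_const, Finset.card_univ, nsmul_eq_mul]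
      ring
    rw [h2]
    have h3 : (kS : ℝ≥0∞) * (kA : ℝ≥0∞) * (J.card : ℝ≥0∞) = ENNReal.ofReal Nreal := by
      rw [hNdef, ← hJcard]
      rw [ENNReal.ofReal_mul (by positivity), ENNReal.ofReal_mul (by positivity)]
      simp [ENNReal.ofReal_natCast]
    rw [h3, ← ENNReal.ofReal_mul (le_of_lt hNpos), hcdef,
      mul_div_cancel₀ _ (ne_of_gt hNpos)]
  -- the inclusion
  have hincl : Badᶜ ⊆ {ω | ∀ (sb : Sb) (a : A), ∑ sb' : Sb,
      |(1 / (m : ℝ)) * ∑ i : Fin m, (if φ (Y ((sb, a), i) ω) = sb' then (1 : ℝ) else 0)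
        - ∑ s' ∈ Finset.univ.filter (fun s' => φ s' = sb'), T (x sb a) a s'| ≤ ε} := by
    intro ω hω
    simp only [hBaddef, Set.compl_iUnion, Set.mem_iInter, Set.mem_compl_iff] at hω
    intro sb a
    set phat : Sb → ℝ := fun sb' =>
      (1 / (m : ℝ)) * ∑ i : Fin m, (if φ (Y ((sb, a), i) ω) = sb' then (1 : ℝ) else 0)
      with hphatdef
    set pf : Sb → ℝ := fun sb' =>
      ∑ s' ∈ Finset.univ.filter (fun s' => φ s' = sb'), T (x sb a) a s' with hpfdef
    show ∑ sb' : Sb, |phat sb' - pf sb'| ≤ ε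
    -- partial sums of phat
    have hphatC : ∀ C : Finset Sb, ∑ sb' ∈ C, phat sb'
        = (1 / (m : ℝ)) * ∑ i : Fin m, (if φ (Y ((sb, a), i) ω) ∈ C then (1 : ℝ) else 0) := by
      intro C
      rw [hphatdef, ← Finset.mul_sum]
      congr 1
      rw [Finset.sum_comm]
      refine Finset.sum_congr rfl fun i _ => ?_
      exact Finset.sum_ite_eq C (φ (Y ((sb, a), i) ω)) (fun _ => (1 : ℝ))
    have hphat1 : ∑ sb' : Sb, phat sb' = 1 := by
      rw [hphatC Finset.univ]
      simp [hm0]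
    have hpfC : ∀ C : Finset Sb, ∑ sb' ∈ C, pf sb' = pB sb a C := by
      intro C
      rw [hpfdef, hpBdef]
      exact Finset.sum_fiberwise_eq_sum_filter Finset.univ C φ (T (x sb a) a)
    have hpf1 : ∑ sb' : Sb, pf sb' = 1 := by
      rw [hpfC Finset.univ]
      rw [hpBdef]
      simp only [Finset.mem_univ, Finset.filter_true]
      · exact hT1 _ _
    -- the extremal subset
    set B : Finset Sb := Finset.univ.filter (fun sb' => pf sb' < phat sb') with hBdef
    have hsplit : ∑ sb' : Sb, |phat sb' - pf sb'|
        = 2 * (∑ sb' ∈ B, phat sb' - ∑ sb' ∈ B, pf sb') := by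
      have habs1 : ∑ sb' ∈ B, |phat sb' - pf sb'| = ∑ sb' ∈ B, (phat sb' - pf sb') := by
        refine Finset.sum_congr rfl fun sb' h => ?_
        rw [hBdef, Finset.mem_filter] at h
        exact abs_of_pos (by linarith [h.2])
      have habs2 : ∑ sb' ∈ Finset.univ.filter (fun sb' => ¬ pf sb' < phat sb'),
          |phat sb' - pf sb'|
          = ∑ sb' ∈ Finset.univ.filter (fun sb' => ¬ pf sb' < phat sb'),
            (pf sb' - phat sb') := by
        refine Finset.sum_congr rfl fun sb' h => ?_
        rw [Finset.mem_filter] at h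
        rw [abs_sub_comm]
        exact abs_of_nonneg (by linarith [not_lt.mp h.2])
      have htot := Finset.sum_filter_add_sum_filter_not Finset.univ
        (fun sb' => pf sb' < phat sb') (fun sb' => |phat sb' - pf sb'|)
      have htot2 := Finset.sum_filter_add_sum_filter_not Finset.univ
        (fun sb' => pf sb' < phat sb') (fun sb' => pf sb' - phat sb')
      have hsub1 : ∑ sb' ∈ B, (phat sb' - pf sb')
          = ∑ sb' ∈ B, phat sb' - ∑ sb' ∈ B, pf sb' := Finset.sum_sub_distrib _ _
      have hsub2 : ∑ sb' ∈ B, (pf sb' - phat sb')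
          = ∑ sb' ∈ B, pf sb' - ∑ sb' ∈ B, phat sb' := Finset.sum_sub_distrib _ _
      have hsubu : ∑ sb' : Sb, (pf sb' - phat sb')
          = ∑ sb' : Sb, pf sb' - ∑ sb' : Sb, phat sb' := Finset.sum_sub_distrib _ _
      rw [← htot, habs1, habs2, hsub1]
      rw [hsub2] at htot2
      rw [hsubu, hpf1, hphat1] at htot2
      linarith
    rw [hsplit]
    by_cases hB1 : B = ∅
    · rw [hB1]
      simp
      linarith
    by_cases hB2 : B = Finset.univ
    · rw [hB2, hphat1, hpf1]
      simp
      linarith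
    · have hBJ : B ∈ J := by
        rw [hJdef, Finset.mem_filter]
        exact ⟨Finset.mem_univ _, hB1, hB2⟩
      have hbad := hω sb a B hBJ
      rw [hEdef, Set.mem_setOf_eq, not_le] at hbad
      have hWval : ∀ i : Fin m, W sb a B i ω
          = (if φ (Y ((sb, a), i) ω) ∈ B then (1 : ℝ) else 0) := by
        intro i; simp [hWdef, Function.comp]
      rw [Finset.sum_congr rfl (fun i _ => hWval i)] at hbad
      have hlt : ∑ sb' ∈ B, phat sb' < pB sb a B + ε / 2 := by
        rw [hphatC B]
        rw [div_mul_eq_mul_div, one_mul, div_lt_iff₀ hmpos, mul_comm]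
        exact hbad
      rw [hpfC B]
      linarith
  -- conclude
  have hcompl : 1 - μ Bad ≤ μ Badᶜ := by
    rw [tsub_le_iff_right]
    calc (1 : ℝ≥0∞) = μ Set.univ := (measure_univ (μ := μ)).symm
      _ = μ (Badᶜ ∪ Bad) := by rw [Set.compl_union_self]
      _ ≤ μ Badᶜ + μ Bad := measure_union_le _ _
  calc 1 - ENNReal.ofReal δ ≤ 1 - μ Bad := tsub_le_tsub_left hBadBound 1
    _ ≤ μ Badᶜ := hcompl
    _ ≤ _ := measure_mono hincl
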